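/- With abelian recollement gluing data, if an object M of 𝒜 has no nonzero subobject supported on Z and no nonzero quotient supported on Z, then the counit j_! j^* M → M is an epimorphism, the unit M → j_* j^* M is a monomorphism, their composite equals the canonical morphism c_{j^* M} : j_! j^* M → j_* j^* M, and consequently M is canonically isomorphic to j_!*(j^* M). (This is the categorical content of the lemma that a smooth mixed motive M is canonically isomorphic to j_!* j^* M.) -/

import Mathlib

/-!
Abelian recollement gluing data, abstracting the open immersion `j : U → S`:
abelian categories `A` and `B` (the latter playing the role of `𝒜_U`), an exact
functor `jstar : A ⥤ B` with a left adjoint `jlow` (`j_!`) and a right adjoint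
`jup` (`j_*`), such that the unit of `j_! ⊣ j^*` and the counit of `j^* ⊣ j_*`
are isomorphisms.  For `N : B`, `cmap N : j_! N ⟶ j_* N` is the unique morphism
whose image under `j^*` is `id_N` (under the canonical identifications), and the
intermediate extension `j_!* N` is its image.  "`X` is supported on `Z`" means
`j^* X ≅ 0`, i.e. `IsZero (jstar.obj X)`.
-/

open CategoryTheory CategoryTheory.Limits

variable {A : Type*} [Category A] [Abelian A]
variable {B : Type*} [Category B] [Abelian B]

/-- The canonical morphism `c_N : j_! N ⟶ j_* N`, corresponding under the
adjunction `j_! ⊣ j^*` to the inverse of the counit `j^* j_* N ≅ N`. -/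
noncomputable def cmap (jstar : A ⥤ B) (jlow jup : B ⥤ A)
    (adj1 : jlow ⊣ jstar) (adj2 : jstar ⊣ jup) [IsIso adj2.counit] (N : B) :
    jlow.obj N ⟶ jup.obj N :=
  (adj1.homEquiv N (jup.obj N)).symm (inv (adj2.counit.app N))

/-- The intermediate extension `j_!* N := Im (c_N : j_! N ⟶ j_* N)`. -/
noncomputable def interExt (jstar : A ⥤ B) (jlow jup : B ⥤ A)
    (adj1 : jlow ⊣ jstar) (adj2 : jstar ⊣ jup) [IsIso adj2.counit] (N : B) : A :=
  image (cmap jstar jlow jup adj1 adj2 N)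

/-- if `M` has no nonzero subobject supported on `Z` and no nonzero
quotient supported on `Z`, then the counit `j_! j^* M → M` is an epimorphism,
the unit `M → j_* j^* M` is a monomorphism, their composite equals the canonical
morphism `c_{j^* M} : j_! j^* M ⟶ j_* j^* M`, and consequently the resulting
mono factorisation exhibits `M` as (canonically isomorphic to) `j_!*(j^* M)`:
the comparison map `j_!*(j^* M) ⟶ M` induced by the image property is an
isomorphism. -/
theorem isIso_interExt_comparison_of_no_supported_sub_quotient
    (jstar : A ⥤ B) (jlow jup : B ⥤ A)
    (adj1 : jlow ⊣ jstar) (adj2 : jstar ⊣ jup)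
    [IsIso adj1.unit] [IsIso adj2.counit]
    [PreservesFiniteLimits jstar] [PreservesFiniteColimits jstar]
    (M : A)
    (hsub : ∀ (Y : A) (f : Y ⟶ M) [Mono f], IsZero (jstar.obj Y) → IsZero Y)
    (hquo : ∀ (Q : A) (g : M ⟶ Q) [Epi g], IsZero (jstar.obj Q) → IsZero Q) :
    Epi (adj1.counit.app M) ∧
    Mono (adj2.unit.app M) ∧
    ∃ hfac : adj1.counit.app M ≫ adj2.unit.app M =
        cmap jstar jlow jup adj1 adj2 (jstar.obj M),
      ∀ hm : Mono (adj2.unit.app M),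
        IsIso (image.lift
          { I := M
            m := adj2.unit.app M
            m_mono := hm
            e := adj1.counit.app M
            fac := hfac }) := by
  -- jstar.map of the counit is a split epi
  haveI : IsSplitEpi (jstar.map (adj1.counit.app M)) :=
    ⟨⟨⟨adj1.unit.app (jstar.obj M), adj1.right_triangle_components M⟩⟩⟩
  haveI : IsSplitMono (jstar.map (adj2.unit.app M)) :=
    ⟨⟨⟨adj2.counit.app (jstar.obj M), adj2.left_triangle_components M⟩⟩⟩
  have hepi : Epi (adj1.counit.app M) := by
    apply Abelian.epi_of_cokernel_π_eq_zero
    have hz : IsZero (cokernel (adj1.counit.app M)) := by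
      refine hquo _ (cokernel.π _) ?_
      exact (isZero_zero B).of_iso (PreservesCokernel.iso jstar _ ≪≫
        cokernel.ofEpi (jstar.map (adj1.counit.app M)))
    exact hz.eq_zero_of_tgt _
  have hmono : Mono (adj2.unit.app M) := by
    apply Abelian.mono_of_kernel_ι_eq_zero
    have hz : IsZero (kernel (adj2.unit.app M)) := by
      refine hsub _ (kernel.ι _) ?_
      exact (isZero_zero B).of_iso (PreservesKernel.iso jstar _ ≪≫
        kernel.ofMono (jstar.map (adj2.unit.app M)))
    exact hz.eq_zero_of_src _
  have hfac : adj1.counit.app M ≫ adj2.unit.app M =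
      cmap jstar jlow jup adj1 adj2 (jstar.obj M) := by
    have h1 : jstar.map (adj2.unit.app M) = inv (adj2.counit.app (jstar.obj M)) :=
      IsIso.eq_inv_of_inv_hom_id (adj2.left_triangle_components M)
    rw [cmap, Adjunction.homEquiv_counit, ← h1, adj1.counit_naturality]
    rfl
  refine ⟨hepi, hmono, hfac, fun hm => ?_⟩
  set F : MonoFactorisation (cmap jstar jlow jup adj1 adj2 (jstar.obj M)) :=
    { I := M
      m := adj2.unit.app M
      m_mono := hm
      e := adj1.counit.app M
      fac := hfac }
  haveI : StrongEpi F.e := strongEpi_of_epi _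
  let F' : StrongEpiMonoFactorisation (cmap jstar jlow jup adj1 adj2 (jstar.obj M)) :=
    { toMonoFactorisation := F, e_strong_epi := inferInstance }
  have hI : IsImage F := F'.toMonoIsImage
  haveI := hm
  have h2 : hI.lift (Image.monoFactorisation _) ≫
      image.ι (cmap jstar jlow jup adj1 adj2 (jstar.obj M)) = adj2.unit.app M := by
    exact hI.lift_fac (Image.monoFactorisation _)
  refine ⟨hI.lift (Image.monoFactorisation _), ?_, ?_⟩
  · rw [← cancel_mono (image.ι (cmap jstar jlow jup adj1 adj2 (jstar.obj M))),
      Category.assoc, h2, Category.id_comp]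
    exact image.lift_fac F
  · rw [← cancel_mono (adj2.unit.app M), Category.assoc,
      show image.lift F ≫ adj2.unit.app M = image.ι _ from image.lift_fac F, h2,
      Category.id_comp]
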